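/- For every n ≥ 0 and every x with |x| < π/2, the n-th derivative of tan at x equals T(n,1) + Σ_{k=1}^{n+1} (k−1)! · T(n+1, k) · tan(x)^k, where T(n,k) are the higher-order tangent numbers. -/

import Mathlib

open Real Finset

/-- Tangent numbers: tan t = Σ Tₙ tⁿ/n!. -/
noncomputable def tangentNumber (n : ℕ) : ℝ := iteratedDeriv n Real.tan 0

/-- Secant numbers: sec t = Σ Sₙ tⁿ/n!. -/
noncomputable def secantNumber (n : ℕ) : ℝ := iteratedDeriv n (fun t : ℝ => 1 / Real.cos t) 0

/-- Higher-order tangent numbers: tanᵏ t / k! = Σ T(n,k) tⁿ/n!. -/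
noncomputable def T (n k : ℕ) : ℝ :=
  iteratedDeriv n (fun t : ℝ => Real.tan t ^ k) 0 / (Nat.factorial k : ℝ)

/-- Higher-order secant numbers: sec t · tanᵏ t / k! = Σ S(n,k) tⁿ/n!. -/
noncomputable def S (n k : ℕ) : ℝ :=
  iteratedDeriv n (fun t : ℝ => Real.tan t ^ k / Real.cos t) 0 / (Nat.factorial k : ℝ)

/-- Higher-order arctangent numbers: arctanᵏ t / k! = Σ T*(n,k) tⁿ/n!. -/
noncomputable def Tstar (n k : ℕ) : ℝ :=
  iteratedDeriv n (fun t : ℝ => Real.arctan t ^ k) 0 / (Nat.factorial k : ℝ)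

/-- Binomial coefficient with integer lower index (0 if lower index is negative). -/
noncomputable def chooseZ (a : ℕ) (b : ℤ) : ℝ :=
  if 0 ≤ b then (a.choose b.toNat : ℝ) else 0

/- ### Auxiliary development -/

/-- Coefficients of the polynomials `P n` with `tan⁽ⁿ⁾ = P n (tan)`. -/
noncomputable def aCoeff : ℕ → ℕ → ℝ
  | 0, j => if j = 1 then 1 else 0
  | n+1, j => ((j : ℝ) + 1) * aCoeff n (j+1) +
      (if j = 0 then 0 else ((j : ℝ) - 1) * aCoeff n (j-1))

lemma aCoeff_eq_zero : ∀ n j, n + 1 < j → aCoeff n j = 0 := by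
  intro n
  induction n with
  | zero => intro j hj; simp [aCoeff]; omega
  | succ n ih =>
    intro j hj
    have h1 : aCoeff n (j+1) = 0 := ih _ (by omega)
    have h2 : aCoeff n (j-1) = 0 := ih _ (by omega)
    simp [aCoeff, h1, h2]

lemma sOpen : IsOpen {y : ℝ | |y| < Real.pi / 2} :=
  isOpen_lt continuous_abs continuous_const

lemma cos_ne_zero_of_mem {y : ℝ} (hy : |y| < Real.pi / 2) : Real.cos y ≠ 0 := by
  rcases abs_lt.1 hy with ⟨h1, h2⟩
  exact (Real.cos_pos_of_mem_Ioo ⟨h1, h2⟩).ne'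

lemma one_div_cos_sq {y : ℝ} (hy : Real.cos y ≠ 0) :
    1 / Real.cos y ^ 2 = 1 + Real.tan y ^ 2 := by
  rw [← Real.inv_one_add_tan_sq hy, one_div, inv_inv]

/-- The combinatorial resummation. -/
lemma aCoeff_sum (n : ℕ) (y : ℝ) :
    ∑ j ∈ range (n+2), aCoeff n j * ((j : ℝ) * y^(j-1) * (1 + y^2)) =
      ∑ j ∈ range (n+3), aCoeff (n+1) j * y^j := by
  have split : ∀ j ∈ range (n+2), aCoeff n j * ((j : ℝ) * y^(j-1) * (1 + y^2)) =
      (j : ℝ) * aCoeff n j * y^(j-1) + (j : ℝ) * aCoeff n j * y^(j+1) := by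
    intro j _
    rcases Nat.eq_zero_or_pos j with rfl | hj
    · simp
    · have hp : y ^ (j-1) * y ^ 2 = y ^ (j+1) := by
        rw [← pow_add]; congr 1; omega
      linear_combination aCoeff n j * (j:ℝ) * hp
  rw [Finset.sum_congr rfl split, Finset.sum_add_distrib]
  -- RHS split
  have rhs : ∀ j ∈ range (n+3), aCoeff (n+1) j * y^j =
      ((j : ℝ)+1) * aCoeff n (j+1) * y^j +
        (if j = 0 then 0 else ((j : ℝ) - 1) * aCoeff n (j-1)) * y^j := by
    intro j _; rw [aCoeff]; ring
  rw [Finset.sum_congr rfl rhs, Finset.sum_add_distrib]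
  congr 1
  · -- first sums equal
    rw [Finset.sum_range_succ' (fun j => (j:ℝ) * aCoeff n j * y^(j-1))]
    rw [Finset.sum_range_succ ((fun j => ((j:ℝ)+1) * aCoeff n (j+1) * y^j)),
        Finset.sum_range_succ ((fun j => ((j:ℝ)+1) * aCoeff n (j+1) * y^j))]
    rw [aCoeff_eq_zero n (n+2) (by omega), aCoeff_eq_zero n (n+3) (by omega)]
    simp only [Nat.cast_zero, zero_mul, mul_zero, zero_add, add_zero]
    apply Finset.sum_congr rfl
    intro i _
    simp only [Nat.add_sub_cancel]
    push_cast
    ring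
  · -- second sums equal
    rw [Finset.sum_range_succ' (fun j =>
      (if j = 0 then (0:ℝ) else ((j : ℝ) - 1) * aCoeff n (j-1)) * y^j)]
    norm_num

/-- Key analytic lemma: on `|x| < π/2`, the `n`-th derivative of `tan` is the
polynomial with coefficients `aCoeff n` evaluated at `tan x`. -/
lemma tan_iteratedDeriv (n : ℕ) : ∀ x : ℝ, |x| < Real.pi / 2 →
    iteratedDeriv n Real.tan x = ∑ j ∈ range (n+2), aCoeff n j * Real.tan x ^ j := by
  induction n with
  | zero =>
    intro x _
    simp [Finset.sum_range_succ, aCoeff]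
  | succ n ih =>
    intro x hx
    have hcos : Real.cos x ≠ 0 := cos_ne_zero_of_mem hx
    have hev : iteratedDeriv n Real.tan =ᶠ[nhds x]
        (fun t => ∑ j ∈ range (n+2), aCoeff n j * Real.tan t ^ j) := by
      filter_upwards [sOpen.mem_nhds hx] with y hy
      exact ih y hy
    rw [iteratedDeriv_succ, hev.deriv_eq]
    have hd : HasDerivAt (fun t => ∑ j ∈ range (n+2), aCoeff n j * Real.tan t ^ j)
        (∑ j ∈ range (n+2), aCoeff n j * ((j : ℝ) * Real.tan x ^ (j-1) * (1 / Real.cos x ^ 2)))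
        x := by
      apply HasDerivAt.fun_sum
      intro j _
      exact ((Real.hasDerivAt_tan hcos).pow j).const_mul _
    rw [hd.deriv]
    calc ∑ j ∈ range (n+2), aCoeff n j * ((j:ℝ) * Real.tan x ^ (j-1) * (1 / Real.cos x ^ 2))
        = ∑ j ∈ range (n+2), aCoeff n j * ((j:ℝ) * Real.tan x ^ (j-1) * (1 + Real.tan x ^ 2)) :=
          by rw [one_div_cos_sq hcos]
      _ = ∑ j ∈ range (n+3), aCoeff (n+1) j * Real.tan x ^ j := aCoeff_sum n _

lemma iteratedDerivWithin_of_isOpen' {n : ℕ} {f : ℝ → ℝ} {s : Set ℝ} {x : ℝ}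
    (hs : IsOpen s) (hx : x ∈ s) : iteratedDerivWithin n f s x = iteratedDeriv n f x := by
  rw [iteratedDerivWithin, iteratedDeriv, iteratedFDerivWithin_of_isOpen n hs hx]

lemma contDiffOn_tan_pow (k : ℕ) {m : ℕ} :
    ContDiffOn ℝ m (fun t : ℝ => Real.tan t ^ k) {y : ℝ | |y| < Real.pi / 2} := by
  intro y hy
  exact ((Real.contDiffAt_tan.2 (cos_ne_zero_of_mem hy)).pow k).contDiffWithinAt

lemma tan_pow_zero_iter (m : ℕ) (hm : m ≠ 0) :
    iteratedDeriv m (fun t : ℝ => Real.tan t ^ 0) 0 = 0 := by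
  obtain ⟨m, rfl⟩ := Nat.exists_eq_succ_of_ne_zero hm
  rw [iteratedDeriv_succ']
  have : deriv (fun t : ℝ => Real.tan t ^ 0) = fun _ => (0:ℝ) := by
    funext t; simp
  rw [this]
  induction m with
  | zero => simp
  | succ m ihm =>
    rw [iteratedDeriv_succ']
    simpa using ihm

lemma b_rec (m j : ℕ) (hj : 1 ≤ j) :
    iteratedDeriv (m+1) (fun t : ℝ => Real.tan t ^ j) 0 =
      (j:ℝ) * (iteratedDeriv m (fun t : ℝ => Real.tan t ^ (j-1)) 0 +
        iteratedDeriv m (fun t : ℝ => Real.tan t ^ (j+1)) 0) := by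
  have h0 : (0:ℝ) ∈ {y : ℝ | |y| < Real.pi / 2} := by
    rw [Set.mem_setOf_eq, abs_zero]; exact Real.pi_div_two_pos
  rw [iteratedDeriv_succ']
  have h1 : deriv (fun t : ℝ => Real.tan t ^ j) =ᶠ[nhds (0:ℝ)]
      fun t => (j:ℝ) * (Real.tan t ^ (j-1) + Real.tan t ^ (j+1)) := by
    filter_upwards [sOpen.mem_nhds h0] with y hy
    have hcos := cos_ne_zero_of_mem hy
    rw [show (fun t : ℝ => Real.tan t ^ j) = Real.tan ^ j from rfl,
      ((Real.hasDerivAt_tan hcos).pow j).deriv, one_div_cos_sq hcos]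
    have hp : Real.tan y ^ (j-1) * Real.tan y ^ 2 = Real.tan y ^ (j+1) := by
      rw [← pow_add]; congr 1; omega
    linear_combination (j:ℝ) * hp
  rw [Filter.EventuallyEq.iteratedDeriv_eq m h1]
  have hUD : UniqueDiffOn ℝ {y : ℝ | |y| < Real.pi / 2} := sOpen.uniqueDiffOn
  rw [← iteratedDerivWithin_of_isOpen' sOpen h0,
      iteratedDerivWithin_const_mul h0 hUD _
        (((contDiffOn_tan_pow (j-1)).add (contDiffOn_tan_pow (j+1))) 0 h0)]
  have hadd : (fun t : ℝ => Real.tan t ^ (j-1) + Real.tan t ^ (j+1)) =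
      (fun t : ℝ => Real.tan t ^ (j-1)) + (fun t : ℝ => Real.tan t ^ (j+1)) := rfl
  rw [hadd, iteratedDerivWithin_add h0 hUD (contDiffOn_tan_pow (j-1) 0 h0) (contDiffOn_tan_pow (j+1) 0 h0),
      iteratedDerivWithin_of_isOpen' sOpen h0, iteratedDerivWithin_of_isOpen' sOpen h0]

lemma bridge : ∀ n : ℕ, ∀ j : ℕ, 1 ≤ j →
    iteratedDeriv (n+1) (fun t : ℝ => Real.tan t ^ j) 0 = (j:ℝ) * aCoeff n j := by
  intro n
  induction n with
  | zero =>
    intro j hj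
    rw [b_rec 0 j hj]
    simp only [iteratedDeriv_zero, Real.tan_zero]
    rcases eq_or_lt_of_le hj with h | h
    · subst h; norm_num [aCoeff]
    · have h1 : j - 1 ≠ 0 := by omega
      have h2 : j ≠ 1 := by omega
      simp [zero_pow h1, zero_pow (Nat.succ_ne_zero j), aCoeff, h2]
  | succ n ih =>
    intro j hj
    rw [b_rec (n+1) j hj]
    rcases eq_or_lt_of_le hj with h | h
    · subst h
      rw [tan_pow_zero_iter (n+1) (Nat.succ_ne_zero n), ih 2 (by norm_num)]
      simp only [aCoeff]
      norm_num
    · have hj1 : 1 ≤ j - 1 := by omega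
      rw [ih (j-1) hj1, ih (j+1) (by omega)]
      rw [show aCoeff (n+1) j = ((j : ℝ) + 1) * aCoeff n (j+1) +
          (if j = 0 then 0 else ((j : ℝ) - 1) * aCoeff n (j-1)) from rfl]
      rw [if_neg (by omega : j ≠ 0)]
      have hc : ((j - 1 : ℕ) : ℝ) = (j : ℝ) - 1 := by
        have := Nat.cast_sub (by omega : 1 ≤ j) (R := ℝ); simpa using this
      rw [hc]
      push_cast
      ring

lemma T_eq (n k : ℕ) (hk : 1 ≤ k) :
    ((k - 1).factorial : ℝ) * T (n+1) k = aCoeff n k := by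
  rw [T, bridge n k hk]
  have hfac : (k.factorial : ℝ) = (k : ℝ) * ((k-1).factorial : ℝ) := by
    rw [← Nat.mul_factorial_pred (by omega : k ≠ 0)]
    push_cast; ring
  rw [hfac]
  have h1 : ((k-1).factorial : ℝ) ≠ 0 := Nat.cast_ne_zero.2 (Nat.factorial_ne_zero _)
  have h2 : (k : ℝ) ≠ 0 := Nat.cast_ne_zero.2 (by omega)
  field_simp

lemma T_n_one (n : ℕ) : T n 1 = aCoeff n 0 := by
  have h0 : |(0:ℝ)| < Real.pi / 2 := by rw [abs_zero]; exact Real.pi_div_two_pos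
  have := tan_iteratedDeriv n 0 h0
  rw [Real.tan_zero] at this
  rw [T, show (fun t : ℝ => Real.tan t ^ 1) = Real.tan from funext fun t => pow_one _,
    this, Finset.sum_eq_single 0 (fun j _ hj => by simp [zero_pow hj])
      (fun h => absurd (Finset.mem_range.2 (by omega)) h)]
  simp

theorem stmt17 (n : ℕ) (x : ℝ) (hx : |x| < Real.pi / 2) :
    iteratedDeriv n Real.tan x =
      T n 1 + ∑ k ∈ Finset.Icc 1 (n + 1),
        ((k - 1).factorial : ℝ) * T (n + 1) k * Real.tan x ^ k := by
  rw [tan_iteratedDeriv n x hx, Finset.sum_range_succ'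
    (fun j => aCoeff n j * Real.tan x ^ j)]
  rw [add_comm]
  congr 1
  · simp [T_n_one]
  · rw [← Finset.Ico_add_one_right_eq_Icc, Finset.sum_Ico_eq_sum_range]
    simp only [Nat.add_sub_cancel, show n + 1 + 1 - 1 = n + 1 from rfl]
    apply Finset.sum_congr rfl
    intro i _
    rw [T_eq n (1+i) (by omega), add_comm 1 i]
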